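/- A finite positive Borel measure μ on the circle S¹ is non-atomic if and only if lim_{N→∞} (1/(2N+1)) ∑_{n=-N}^{N} |μ̂(n)|² = 0. -/

import Mathlib

open MeasureTheory Filter Finset

open AddCircle
open scoped ComplexConjugate

lemma fourier_zpow (n : ℤ) (x : AddCircle (1:ℝ)) :
    fourier n x = (toCircle x : ℂ) ^ n := by
  have hz : ((toCircle x : ℂ)) ≠ 0 := Circle.coe_ne_zero _
  have hpos : ∀ k : ℕ, fourier (k : ℤ) x = (toCircle x : ℂ) ^ (k : ℤ) := by
    intro k
    induction k with
    | zero => simpa using (fourier_zero : fourier 0 x = 1)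
    | succ m ih =>
        have : ((m : ℤ) + 1) = ((m+1 : ℕ) : ℤ) := by push_cast; ring
        rw [← this, fourier_add, ih, fourier_one, zpow_add₀ hz, zpow_one]
  rcases le_or_gt 0 n with h | h
  · obtain ⟨k, rfl⟩ := Int.eq_ofNat_of_zero_le h; exact hpos k
  · obtain ⟨k, rfl⟩ : ∃ k : ℕ, n = -(k : ℤ) := ⟨n.natAbs, by omega⟩
    rw [fourier_neg, hpos k, zpow_neg]
    exact ((Complex.inv_eq_conj (by simp [Circle.norm_coe])).symm)

lemma fourier_arg_add (n : ℤ) (x y : AddCircle (1:ℝ)) :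
    fourier n (x + y) = fourier n x * fourier n y := by
  simp_rw [fourier_apply, smul_add, toCircle_add, Circle.coe_mul]

lemma fourier_arg_neg (n : ℤ) (x : AddCircle (1:ℝ)) :
    fourier n (-x) = (starRingEnd ℂ) (fourier n x) := by
  rw [fourier_apply, smul_neg, fourier_neg']

lemma toCircle_eq_one_iff (x : AddCircle (1:ℝ)) : (toCircle x : ℂ) = 1 ↔ x = 0 := by
  constructor
  · intro h
    apply injective_toCircle (T := (1:ℝ)) one_ne_zero
    have : (toCircle x : ℂ) = (toCircle (0 : AddCircle (1:ℝ)) : ℂ) := by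
      rw [h, fourier_zero']
    exact_mod_cast Subtype.coe_injective this
  · rintro rfl; rw [fourier_zero']

lemma sum_zpow_Icc (z : ℂ) (hz : z ≠ 0) (N : ℕ) :
    ∑ n ∈ Finset.Icc (-(N:ℤ)) (N:ℤ), z ^ n
      = z ^ (-(N:ℤ)) * ∑ k ∈ Finset.range (2*N+1), z ^ k := by
  rw [Finset.mul_sum]
  refine Finset.sum_nbij' (fun n => (n + N).toNat) (fun k => (k : ℤ) - N) ?_ ?_ ?_ ?_ ?_
  · intro a ha; simp only [Finset.mem_Icc] at ha; simp only [Finset.mem_range]; omega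
  · intro a ha; simp only [Finset.mem_range] at ha; simp only [Finset.mem_Icc]; omega
  · intro a ha; simp only [Finset.mem_Icc] at ha; show ((a + (N:ℤ)).toNat : ℤ) - N = a; omega
  · intro a ha; simp only [Finset.mem_range] at ha; show ((a:ℤ) - N + N).toNat = a; omega
  · intro a ha; simp only [Finset.mem_Icc] at ha
    rw [← zpow_natCast, ← zpow_add₀ hz]
    congr 1; beta_reduce; omega

lemma norm_sum_zpow_le (z : ℂ) (hz : ‖z‖ = 1) (h1 : z ≠ 1) (N : ℕ) :
    ‖∑ n ∈ Finset.Icc (-(N:ℤ)) (N:ℤ), z ^ n‖ ≤ 2 / ‖z - 1‖ := by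
  have hz0 : z ≠ 0 := by intro h; rw [h] at hz; simp at hz
  rw [sum_zpow_Icc z hz0, norm_mul, norm_zpow, hz, one_zpow, one_mul,
    geom_sum_eq h1]
  rw [norm_div]
  gcongr
  calc ‖z ^ (2*N+1) - 1‖ ≤ ‖z ^ (2*N+1)‖ + ‖(1:ℂ)‖ := norm_sub_le _ _
  _ = 2 := by rw [norm_pow, hz]; norm_num


lemma fourier_arg_zero (n : ℤ) : fourier n (0 : AddCircle (1:ℝ)) = 1 := by
  rw [fourier_apply, smul_zero, fourier_zero']

lemma two_N_one_ne (N : ℕ) : (2*(N:ℂ)+1) ≠ 0 := by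
  have hc : (2*(N:ℂ)+1) = ((2*N+1:ℕ):ℂ) := by push_cast; ring
  rw [hc]; exact Nat.cast_ne_zero.mpr (Nat.succ_ne_zero _)

lemma cesaro_at_zero (N : ℕ) :
    (1 / (2*(N:ℂ)+1)) * ∑ n ∈ Finset.Icc (-(N:ℤ)) (N:ℤ), fourier n (0 : AddCircle (1:ℝ)) = 1 := by
  have h : ∀ n ∈ Finset.Icc (-(N:ℤ)) (N:ℤ), fourier n (0 : AddCircle (1:ℝ)) = 1 :=
    fun n _ => fourier_arg_zero n
  have hcard : (((N:ℤ) + 1 - -(N:ℤ)).toNat) = 2*N+1 := by omega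
  rw [Finset.sum_congr rfl h, Finset.sum_const, Int.card_Icc, hcard, nsmul_eq_mul, mul_one]
  have hc : ((2*N+1:ℕ):ℂ) = 2*(N:ℂ)+1 := by push_cast; ring
  rw [hc, one_div_mul_cancel (two_N_one_ne N)]

lemma cesaro_tendsto_zero {x : AddCircle (1:ℝ)} (hx : x ≠ 0) :
    Filter.Tendsto (fun N : ℕ => (1 / (2*(N:ℂ)+1)) * ∑ n ∈ Finset.Icc (-(N:ℤ)) (N:ℤ), fourier n x)
      Filter.atTop (nhds 0) := by
  set z : ℂ := (toCircle x : ℂ) with hzdef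
  have hz1 : z ≠ 1 := fun h => hx ((toCircle_eq_one_iff x).mp h)
  have hznorm : ‖z‖ = 1 := by simp [hzdef, Circle.norm_coe]
  have hden : ∀ N : ℕ, (0:ℝ) < 2*(N:ℝ)+1 := fun N => by positivity
  have hbound : ∀ N : ℕ, ‖(1 / (2*(N:ℂ)+1)) * ∑ n ∈ Finset.Icc (-(N:ℤ)) (N:ℤ), fourier n x‖
      ≤ (1/(2*(N:ℝ)+1)) * (2 / ‖z - 1‖) := by
    intro N
    rw [norm_mul]
    have h1 : ‖(1 / (2*(N:ℂ)+1))‖ = 1/(2*(N:ℝ)+1) := by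
      have h0 : (1 / (2*(N:ℂ)+1)) = ((1/(2*(N:ℝ)+1) : ℝ) : ℂ) := by push_cast; ring
      rw [h0, Complex.norm_real, Real.norm_of_nonneg (by positivity)]
    rw [h1]
    gcongr
    · have h2 : ∀ n ∈ Finset.Icc (-(N:ℤ)) (N:ℤ), fourier n x = z ^ n := fun n _ => fourier_zpow n x
      rw [Finset.sum_congr rfl h2]
      exact norm_sum_zpow_le z hznorm hz1 N
  have hg : Filter.Tendsto (fun N : ℕ => (1/(2*(N:ℝ)+1)) * (2 / ‖z - 1‖)) Filter.atTop (nhds 0) := by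
    rw [show (0:ℝ) = 0 * (2 / ‖z - 1‖) by ring]
    apply Filter.Tendsto.mul_const
    have hcomp : Filter.Tendsto (fun N : ℕ => (1 : ℝ)/((2*N+1 : ℕ):ℝ)) Filter.atTop (nhds 0) :=
      tendsto_one_div_atTop_nhds_zero_nat.comp
        (Filter.tendsto_atTop_atTop.mpr (fun b => ⟨b, fun a ha => by omega⟩))
    exact hcomp.congr (fun N => by push_cast; norm_num)
  exact squeeze_zero_norm hbound hg

lemma norm_fourier' (n : ℤ) (x : AddCircle (1:ℝ)) : ‖fourier n x‖ = 1 := by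
  rw [fourier_apply]; exact Circle.norm_coe _

lemma integrable_fourier_sub (μ : Measure (AddCircle (1:ℝ))) [IsFiniteMeasure μ] (n : ℤ) :
    Integrable (fun p : AddCircle (1:ℝ) × AddCircle (1:ℝ) => fourier n (p.1 - p.2)) (μ.prod μ) := by
  refine ⟨(((fourier n).continuous).comp (continuous_fst.sub continuous_snd)).aestronglyMeasurable, ?_⟩
  exact HasFiniteIntegral.of_bounded (C := 1)
    (Filter.Eventually.of_forall (fun p => le_of_eq (norm_fourier' n _)))

lemma fourier_sq_integral (μ : Measure (AddCircle (1:ℝ))) [IsFiniteMeasure μ] (n : ℤ) :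
    ∫ p : AddCircle (1:ℝ) × AddCircle (1:ℝ), fourier n (p.1 - p.2) ∂(μ.prod μ)
      = ((‖∫ t, fourier n t ∂μ‖ ^ 2 : ℝ) : ℂ) := by
  rw [MeasureTheory.integral_prod _ (integrable_fourier_sub μ n)]
  have h : ∀ t s : AddCircle (1:ℝ), fourier n (t - s) = fourier n t * conj (fourier n s) := by
    intro t s; rw [sub_eq_add_neg, fourier_arg_add, fourier_arg_neg]
  simp_rw [h, integral_const_mul, integral_conj, integral_mul_const]
  rw [Complex.mul_conj]
  rw [Complex.normSq_eq_norm_sq]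


/-- A finite positive Borel measure `μ` on the circle `S¹ = ℝ/ℤ` is non-atomic if and only
if the symmetric Cesàro averages of `|μ̂(n)|²` converge to `0`. -/
theorem nonatomic_iff_cesaro_fourier_sq_tendsto_zero
    (μ : Measure (AddCircle (1 : ℝ))) [IsFiniteMeasure μ] :
    (∀ t : AddCircle (1 : ℝ), μ {t} = 0) ↔
      Tendsto
        (fun N : ℕ => (1 / (2 * (N : ℝ) + 1)) *
          ∑ n ∈ Finset.Icc (-(N : ℤ)) (N : ℤ), ‖∫ t, fourier n t ∂μ‖ ^ 2)
        atTop (nhds 0) := by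
  set A := AddCircle (1:ℝ)
  set ν := μ.prod μ with hνdef
  set D : Set (A × A) := {p | p.1 = p.2} with hDdef
  have hD : MeasurableSet D := measurableSet_eq_fun measurable_fst measurable_snd
  have hνD : ν D = ∫⁻ t, μ {t} ∂μ := by
    rw [hνdef, Measure.prod_apply hD]
    refine lintegral_congr fun t => ?_
    congr 1
    ext s
    simp [hDdef, eq_comm]
  set F : ℕ → A × A → ℂ := fun N p =>
    (1 / (2*(N:ℂ)+1)) * ∑ n ∈ Finset.Icc (-(N:ℤ)) (N:ℤ), fourier n (p.1 - p.2) with hFdef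
  set a : ℕ → ℝ := fun N => (1 / (2 * (N : ℝ) + 1)) *
          ∑ n ∈ Finset.Icc (-(N : ℤ)) (N : ℤ), ‖∫ t, fourier n t ∂μ‖ ^ 2 with hadef
  -- value of the integral of F N
  have hFint : ∀ N : ℕ, ∫ p, F N p ∂ν = ((a N : ℝ) : ℂ) := by
    intro N
    rw [hFdef]
    simp only
    rw [integral_const_mul, integral_finset_sum _ (fun n _ => integrable_fourier_sub μ n)]
    simp_rw [fourier_sq_integral μ]
    rw [hadef]
    push_cast
    ring
  -- dominated convergence
  have hlim : Tendsto (fun N => ∫ p, F N p ∂ν) atTop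
      (nhds (∫ p, D.indicator (fun _ => (1:ℂ)) p ∂ν)) := by
    apply tendsto_integral_of_dominated_convergence (bound := fun _ => (1:ℝ))
    · intro N
      apply Continuous.aestronglyMeasurable
      exact continuous_const.mul (continuous_finset_sum _ (fun n _ =>
        ((fourier n).continuous).comp (continuous_fst.sub continuous_snd)))
    · exact integrable_const 1
    · intro N
      refine Filter.Eventually.of_forall fun p => ?_
      rw [hFdef]
      simp only [norm_mul]
      have h1 : ‖(1 / (2*(N:ℂ)+1))‖ = 1/(2*(N:ℝ)+1) := by
        have h0 : (1 / (2*(N:ℂ)+1)) = ((1/(2*(N:ℝ)+1) : ℝ) : ℂ) := by push_cast; ring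
        rw [h0, Complex.norm_real, Real.norm_of_nonneg (by positivity)]
      have h2 : ‖∑ n ∈ Finset.Icc (-(N:ℤ)) (N:ℤ), fourier n (p.1 - p.2)‖ ≤ 2*(N:ℝ)+1 := by
        refine (norm_sum_le _ _).trans ?_
        have : ∀ n ∈ Finset.Icc (-(N:ℤ)) (N:ℤ), ‖fourier n (p.1 - p.2)‖ = 1 :=
          fun n _ => norm_fourier' n _
        rw [Finset.sum_congr rfl this, Finset.sum_const, Int.card_Icc]
        have hcard : (((N:ℤ) + 1 - -(N:ℤ)).toNat) = 2*N+1 := by omega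
        rw [hcard, nsmul_eq_mul, mul_one]
        push_cast; linarith
      rw [h1]
      calc 1/(2*(N:ℝ)+1) * ‖∑ n ∈ Finset.Icc (-(N:ℤ)) (N:ℤ), fourier n (p.1 - p.2)‖
          ≤ 1/(2*(N:ℝ)+1) * (2*(N:ℝ)+1) := by gcongr
        _ = 1 := by field_simp
    · refine Filter.Eventually.of_forall fun p => ?_
      rcases eq_or_ne p.1 p.2 with h | h
      · have hx : p.1 - p.2 = 0 := sub_eq_zero.mpr h
        have hind : D.indicator (fun _ => (1:ℂ)) p = 1 := Set.indicator_of_mem (show p ∈ D from h) _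
        rw [hind]
        have : ∀ N : ℕ, F N p = 1 := by
          intro N; rw [hFdef]; simp only [hx]; exact cesaro_at_zero N
        simp_rw [this]
        exact tendsto_const_nhds
      · have hx : p.1 - p.2 ≠ 0 := sub_ne_zero.mpr h
        have hind : D.indicator (fun _ => (1:ℂ)) p = 0 := Set.indicator_of_notMem (show p ∉ D from h) _
        rw [hind]
        exact cesaro_tendsto_zero hx
  -- compute the limit integral
  have hInd : ∫ p, D.indicator (fun _ => (1:ℂ)) p ∂ν = (((ν D).toReal : ℝ) : ℂ) := by
    rw [integral_indicator_const (1:ℂ) hD]; simp [Complex.real_smul, Measure.real]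
  rw [hInd] at hlim
  simp_rw [hFint] at hlim
  -- real limit
  have key : Tendsto a atTop (nhds ((ν D).toReal)) := by
    have := (Complex.continuous_re.tendsto _).comp hlim
    simpa [Function.comp_def] using this
  constructor
  · intro h
    have hz : ν D = 0 := by
      rw [hνD, lintegral_congr (fun t => h t), lintegral_zero]
    rw [hz] at key
    simpa using key
  · intro h t
    have hc : (ν D).toReal = 0 := tendsto_nhds_unique key h
    have hz : ν D = 0 := by
      have := measure_ne_top ν D
      exact (ENNReal.toReal_eq_zero_iff _).mp hc |>.resolve_right this
    rw [hνD] at hz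
    by_contra h0
    have hle : μ {t} * μ {t} ≤ ∫⁻ s, μ {s} ∂μ := by
      calc μ {t} * μ {t} = ∫⁻ s in {t}, μ {s} ∂μ := by rw [lintegral_singleton]
        _ ≤ ∫⁻ s, μ {s} ∂μ := setLIntegral_le_lintegral _ _
    rw [hz] at hle
    have : μ {t} * μ {t} = 0 := le_antisymm hle zero_le
    exact h0 (by simpa [mul_eq_zero] using this)
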